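/- Let f, g : ℝ → ℝ be nonnegative, Lebesgue-integrable, measurable functions such that f(-x) = f(x) and g(-x) = g(x) for all x, f is nonincreasing on [0, ∞), g is nonincreasing on [0, ∞), and the convolution integral (f ⋆ g)(x) = ∫ f(t)·g(x - t) dt is finite for every real x. Then the convolution h = f ⋆ g satisfies h(-x) = h(x) for all x and h is nonincreasing on [0, ∞). -/
import Mathlib


open MeasureTheory Set

/-- An even function that is antitone on `[0, ∞)` is "unimodal":
`|a| ≤ |b|` implies `f b ≤ f a`. -/
lemma even_antitone_abs {f : ℝ → ℝ} (hfeven : ∀ x : ℝ, f (-x) = f x)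
    (hfmono : AntitoneOn f (Ici (0:ℝ))) {a b : ℝ} (h : |a| ≤ |b|) :
    f b ≤ f a := by
  have ha : f a = f |a| := by
    rcases abs_choice a with h' | h'
    · rw [h']
    · rw [h', hfeven]
  have hb : f b = f |b| := by
    rcases abs_choice b with h' | h'
    · rw [h']
    · rw [h', hfeven]
  rw [ha, hb]
  exact hfmono (abs_nonneg a) (abs_nonneg b) h

/-- Key analytical lemma for Corollary 2.2 and Proposition 3.2 of the paper:
the convolution of two even, nonnegative, integrable functions that are
nonincreasing on `[0, ∞)` is again even and nonincreasing on `[0, ∞)`. -/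
theorem convolution_even_unimodal
    (f g : ℝ → ℝ)
    (hf0 : ∀ x : ℝ, 0 ≤ f x) (hg0 : ∀ x : ℝ, 0 ≤ g x)
    (hfmeas : Measurable f) (hgmeas : Measurable g)
    (hfint : Integrable f) (hgint : Integrable g)
    (hfeven : ∀ x : ℝ, f (-x) = f x) (hgeven : ∀ x : ℝ, g (-x) = g x)
    (hfmono : AntitoneOn f (Ici (0:ℝ))) (hgmono : AntitoneOn g (Ici (0:ℝ)))
    (hconv : ∀ x : ℝ, Integrable (fun t => f t * g (x - t))) :
    (∀ x : ℝ, (∫ t, f t * g (-x - t)) = ∫ t, f t * g (x - t)) ∧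
    AntitoneOn (fun x : ℝ => ∫ t, f t * g (x - t)) (Ici (0:ℝ)) := by
  constructor
  · -- evenness: substitute t ↦ -t
    intro x
    have := integral_neg_eq_self (fun t => f t * g (-x - t)) (volume : Measure ℝ)
    rw [← this]
    refine integral_congr_ae (Filter.Eventually.of_forall fun t => ?_)
    simp only [hfeven]
    congr 1
    have : -x - -t = -(x - t) := by ring
    rw [this, hgeven]
  · -- monotonicity on [0, ∞)
    intro x hx y hy hxy
    simp only
    set c := x + y with hc
    have hc0 : (0:ℝ) ≤ c := add_nonneg hx hy
    -- pointwise nonnegativity of the symmetrized integrand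
    have key : ∀ t : ℝ, 0 ≤ (f t - f (c - t)) * (g (x - t) - g (y - t)) := by
      intro t
      rcases le_total t (c / 2) with ht | ht
      · -- t ≤ (x+y)/2 : f t ≥ f (c - t) and g (x - t) ≥ g (y - t)
        have h1 : f (c - t) ≤ f t := by
          exact even_antitone_abs hfeven hfmono
            (abs_le_abs (by linarith) (by linarith))
        have h2 : g (y - t) ≤ g (x - t) := by
          exact even_antitone_abs hgeven hgmono
            (abs_le_abs (by linarith) (by linarith))
        exact mul_nonneg (by linarith) (by linarith)
      · -- t ≥ (x+y)/2 : both factors nonpositive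
        have h1 : f t ≤ f (c - t) := by
          exact even_antitone_abs hfeven hfmono
            (abs_le_abs (by linarith) (by linarith))
        have h2 : g (x - t) ≤ g (y - t) := by
          apply even_antitone_abs hgeven hgmono
          rw [abs_sub_comm y t, abs_sub_comm x t]
          exact abs_le_abs (by linarith) (by linarith)
        nlinarith
    -- integrability of the four pieces
    have IA : Integrable (fun t => f t * g (x - t)) := hconv x
    have IB : Integrable (fun t => f t * g (y - t)) := hconv y
    have IC : Integrable (fun t => f (c - t) * g (x - t)) := by
      have h := IB.comp_sub_left c
      refine h.congr (Filter.Eventually.of_forall fun t => ?_)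
      have : y - (c - t) = -(x - t) := by ring
      simp only [this, hgeven]
    have ID : Integrable (fun t => f (c - t) * g (y - t)) := by
      have h := IA.comp_sub_left c
      refine h.congr (Filter.Eventually.of_forall fun t => ?_)
      have : x - (c - t) = -(y - t) := by ring
      simp only [this, hgeven]
    -- reflected integrals: ∫ C = ∫ B and ∫ D = ∫ A
    have eqC : (∫ t, f (c - t) * g (x - t)) = ∫ t, f t * g (y - t) := by
      have h := integral_sub_left_eq_self (fun t => f t * g (y - t)) (volume : Measure ℝ) c
      rw [← h]
      refine integral_congr_ae (Filter.Eventually.of_forall fun t => ?_)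
      have : y - (c - t) = -(x - t) := by ring
      simp only [this, hgeven]
    have eqD : (∫ t, f (c - t) * g (y - t)) = ∫ t, f t * g (x - t) := by
      have h := integral_sub_left_eq_self (fun t => f t * g (x - t)) (volume : Measure ℝ) c
      rw [← h]
      refine integral_congr_ae (Filter.Eventually.of_forall fun t => ?_)
      have : x - (c - t) = -(y - t) := by ring
      simp only [this, hgeven]
    -- combine
    have expand : ∀ t : ℝ, (f t - f (c - t)) * (g (x - t) - g (y - t)) =
        f t * g (x - t) - f t * g (y - t) - f (c - t) * g (x - t)
          + f (c - t) * g (y - t) := by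
      intro t; ring
    have hI : 0 ≤ ∫ t, (f t - f (c - t)) * (g (x - t) - g (y - t)) :=
      integral_nonneg key
    have hsplit : (∫ t, (f t - f (c - t)) * (g (x - t) - g (y - t)))
        = (∫ t, f t * g (x - t)) - (∫ t, f t * g (y - t))
          - (∫ t, f (c - t) * g (x - t)) + ∫ t, f (c - t) * g (y - t) := by
      calc (∫ t, (f t - f (c - t)) * (g (x - t) - g (y - t)))
          = ∫ t, (f t * g (x - t) - f t * g (y - t))
              - (f (c - t) * g (x - t) - f (c - t) * g (y - t)) := by
            congr 1; funext t; ring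
        _ = (∫ t, f t * g (x - t) - f t * g (y - t))
              - ∫ t, f (c - t) * g (x - t) - f (c - t) * g (y - t) :=
            integral_sub (IA.sub IB) (IC.sub ID)
        _ = ((∫ t, f t * g (x - t)) - ∫ t, f t * g (y - t))
              - ((∫ t, f (c - t) * g (x - t)) - ∫ t, f (c - t) * g (y - t)) := by
            rw [integral_sub IA IB, integral_sub IC ID]
        _ = _ := by ring
    rw [hsplit, eqC, eqD] at hI
    linarith
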